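/- In the setup (no conservation law needed), for every state ρ on A: √𝔉_{ρ⊗ρ_B}(X_A⊗1_B − U†(X_{A'}⊗1_{B'})U) ≤ √𝔉_ρ(Y) + √𝔉_{ρ⊗ρ_B}(E†(X_{A'})⊗1_B − U†(X_{A'}⊗1_{B'})U), where E(τ) := Tr_{B'}[U(τ⊗ρ_B)U†], E† is its dual, and Y := X_A − E†(X_{A'}). -/

import Mathlib

open scoped Kronecker
open Matrix
open scoped ComplexOrder Classical

noncomputable section

/-- Positive semidefinite square root of a matrix (junk value `0` if not PSD). -/
noncomputable def matSqrt {n : Type*} [Fintype n] [DecidableEq n]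
    (A : Matrix n n ℂ) : Matrix n n ℂ :=
  if h : A.PosSemidef then
    (h.1.eigenvectorUnitary : Matrix n n ℂ) *
      Matrix.diagonal ((↑) ∘ (Real.sqrt ·) ∘ h.1.eigenvalues) *
      (star h.1.eigenvectorUnitary : Matrix n n ℂ)
  else 0

/-- A quantum state: a positive semidefinite matrix of unit trace. -/
def IsState {n : Type*} [Fintype n] [DecidableEq n] (ρ : Matrix n n ℂ) : Prop :=
  ρ.PosSemidef ∧ ρ.trace = 1

/-- Fidelity `F(ρ,σ) = Tr √(√σ ρ √σ)`. -/
noncomputable def fidelity {n : Type*} [Fintype n] [DecidableEq n]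
    (ρ σ : Matrix n n ℂ) : ℝ :=
  ((matSqrt (matSqrt σ * ρ * matSqrt σ)).trace).re

/-- Purified distance `D_F(ρ,σ) = √(1 − F(ρ,σ)²)`. -/
noncomputable def purifiedDist {n : Type*} [Fintype n] [DecidableEq n]
    (ρ σ : Matrix n n ℂ) : ℝ :=
  Real.sqrt (1 - (fidelity ρ σ) ^ 2)

/-- SLD quantum Fisher information
`𝔉_ρ(X) = 2 ∑_{i,j : λ_i+λ_j>0} ((λ_i−λ_j)²/(λ_i+λ_j)) |⟨i|X|j⟩|²`
(junk value `0` if `ρ` is not Hermitian). -/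
noncomputable def qFisher {n : Type*} [Fintype n] [DecidableEq n]
    (ρ X : Matrix n n ℂ) : ℝ :=
  if hρ : ρ.IsHermitian then
    2 * ∑ i, ∑ j,
      (if 0 < hρ.eigenvalues i + hρ.eigenvalues j then
        ((hρ.eigenvalues i - hρ.eigenvalues j) ^ 2 / (hρ.eigenvalues i + hρ.eigenvalues j)) *
          Complex.normSq (dotProduct (star ⇑(hρ.eigenvectorBasis i))
            (X *ᵥ ⇑(hρ.eigenvectorBasis j)))
      else 0)
  else 0

/-- Positive part of a Hermitian matrix (junk value `0` if not Hermitian). -/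
noncomputable def matPosPart {n : Type*} [Fintype n] [DecidableEq n]
    (W : Matrix n n ℂ) : Matrix n n ℂ :=
  if hW : W.IsHermitian then
    (hW.eigenvectorUnitary : Matrix n n ℂ) *
      Matrix.diagonal (fun i => ((max (hW.eigenvalues i) 0 : ℝ) : ℂ)) *
      star (hW.eigenvectorUnitary : Matrix n n ℂ)
  else 0

/-- Negative part of a Hermitian matrix (junk value `0` if not Hermitian). -/
noncomputable def matNegPart {n : Type*} [Fintype n] [DecidableEq n]
    (W : Matrix n n ℂ) : Matrix n n ℂ :=
  if hW : W.IsHermitian then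
    (hW.eigenvectorUnitary : Matrix n n ℂ) *
      Matrix.diagonal (fun i => ((max (-hW.eigenvalues i) 0 : ℝ) : ℂ)) *
      star (hW.eigenvectorUnitary : Matrix n n ℂ)
  else 0

/-- `Δ_W`: difference between the largest and smallest eigenvalues of a Hermitian matrix. -/
noncomputable def specSpread {n : Type*} [Fintype n] [DecidableEq n]
    (W : Matrix n n ℂ) : ℝ :=
  if hW : W.IsHermitian then (⨆ i, hW.eigenvalues i) - (⨅ i, hW.eigenvalues i) else 0

/-- Trace distance `T(ρ,σ) = ½(Tr (ρ−σ)₊ + Tr (ρ−σ)₋)`. -/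
noncomputable def traceDist {n : Type*} [Fintype n] [DecidableEq n]
    (ρ σ : Matrix n n ℂ) : ℝ :=
  (((matPosPart (ρ - σ)).trace).re + ((matNegPart (ρ - σ)).trace).re) / 2

/-- The dual (adjoint w.r.t. the trace pairing) of a linear map on matrices:
`Tr[(dualMap Φ W) ρ] = Tr[W Φ(ρ)]` for all `ρ` whenever `Φ` is linear. -/
noncomputable def dualMap {n m : Type*} [Fintype n] [DecidableEq n] [Fintype m] [DecidableEq m]
    (Φ : Matrix n n ℂ → Matrix m m ℂ) (W : Matrix m m ℂ) : Matrix n n ℂ :=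
  Matrix.of fun i j => (W * Φ (Matrix.single j i 1)).trace

/-- Partial trace over the second tensor factor. -/
def ptraceRight {α β : Type*} [Fintype β] (M : Matrix (α × β) (α × β) ℂ) : Matrix α α ℂ :=
  Matrix.of fun i j => ∑ k, M (i, k) (j, k)

/-- Partial trace over the first tensor factor. -/
def ptraceLeft {α β : Type*} [Fintype α] (M : Matrix (α × β) (α × β) ℂ) : Matrix β β ℂ :=
  Matrix.of fun i j => ∑ k, M (k, i) (k, j)

/-- A quantum channel: a map admitting a Kraus representation `{K_μ}` with
`∑_μ K_μ† K_μ = 1` (this entails complete positivity, trace preservation and linearity). -/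
def IsCPTP {n m : Type*} [Fintype n] [DecidableEq n] [Fintype m] [DecidableEq m]
    (Φ : Matrix n n ℂ → Matrix m m ℂ) : Prop :=
  ∃ (N : ℕ) (K : Fin N → Matrix m n ℂ),
    (∀ ρ, Φ ρ = ∑ μ, K μ * ρ * (K μ)ᴴ) ∧ (∑ μ, (K μ)ᴴ * K μ = 1)

/-- Tensor extension `Φ ⊗ id` of a map on matrices (correct for linear `Φ`). -/
noncomputable def tensorId {a b r : Type*} [Fintype a] [DecidableEq a]
    [Fintype b] [DecidableEq b] [Fintype r]
    (Φ : Matrix a a ℂ → Matrix b b ℂ)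
    (M : Matrix (a × r) (a × r) ℂ) : Matrix (b × r) (b × r) ℂ :=
  Matrix.of fun p q => Φ (Matrix.of fun i j => M (i, p.2) (j, q.2)) p.1 q.1

/-- Operator norm (ℓ²→ℓ²) of a matrix, as a supremum over unit vectors. -/
noncomputable def opNorm {n : Type*} [Fintype n] (M : Matrix n n ℂ) : ℝ :=
  sSup {x : ℝ | ∃ v : n → ℂ, (∑ i, Complex.normSq (v i)) = 1 ∧
    x = Real.sqrt (∑ i, Complex.normSq ((M *ᵥ v) i))}

end

noncomputable section AuxQF
variable {n : Type*} [Fintype n] [DecidableEq n]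

noncomputable def gw (a b : ℝ) : ℝ := if 0 < a + b then (a - b) ^ 2 / (a + b) else 0

lemma gw_nonneg (a b : ℝ) : 0 ≤ gw a b := by
  unfold gw; split
  · positivity
  · exact le_refl 0

lemma gw_mul_right (a b c : ℝ) (hc : 0 ≤ c) : gw (a * c) (b * c) = c * gw a b := by
  unfold gw
  rcases hc.eq_or_lt with h | h
  · simp [← h]
  · have h2 : a * c + b * c = (a + b) * c := by ring
    rw [h2]
    by_cases hab : 0 < a + b
    · rw [if_pos (mul_pos hab h), if_pos hab]
      field_simp
    · rw [if_neg (fun hcon => hab ((mul_pos_iff_of_pos_right h).mp hcon)), if_neg hab, mul_zero]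

noncomputable def sqForm (d : n → ℝ) (M : Matrix n n ℂ) : ℝ :=
  2 * ∑ i, ∑ j, gw (d i) (d j) * Complex.normSq (M i j)

lemma sqForm_nonneg (d : n → ℝ) (M : Matrix n n ℂ) : 0 ≤ sqForm d M := by
  unfold sqForm
  refine mul_nonneg (by norm_num) (Finset.sum_nonneg fun i _ => Finset.sum_nonneg fun j _ =>
    mul_nonneg (gw_nonneg _ _) (Complex.normSq_nonneg _))

lemma sqForm_norm_eq (d : n → ℝ) (A : Matrix n n ℂ) (x : EuclideanSpace ℝ (n × n))
    (hx : ∀ p, x p = Real.sqrt (gw (d p.1) (d p.2)) * ‖A p.1 p.2‖) :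
    Real.sqrt (sqForm d A) = Real.sqrt 2 * ‖x‖ := by
  rw [EuclideanSpace.norm_eq, ← Real.sqrt_mul (by norm_num)]
  congr 1
  unfold sqForm
  congr 1
  rw [Fintype.sum_prod_type]
  apply Finset.sum_congr rfl; intro i _
  apply Finset.sum_congr rfl; intro j _
  rw [hx, Real.norm_eq_abs, sq_abs, mul_pow, Real.sq_sqrt (gw_nonneg _ _), Complex.sq_norm]

lemma sqrt_sqForm_triangle (d : n → ℝ) (A B : Matrix n n ℂ) :
    Real.sqrt (sqForm d (A + B)) ≤ Real.sqrt (sqForm d A) + Real.sqrt (sqForm d B) := by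
  classical
  set u : EuclideanSpace ℝ (n × n) :=
    (WithLp.toLp 2 (fun p : n × n => Real.sqrt (gw (d p.1) (d p.2)) * ‖A p.1 p.2‖)) with hu
  set v : EuclideanSpace ℝ (n × n) :=
    (WithLp.toLp 2 (fun p : n × n => Real.sqrt (gw (d p.1) (d p.2)) * ‖B p.1 p.2‖)) with hv
  have key : Real.sqrt (sqForm d (A + B)) ≤ Real.sqrt 2 * ‖u + v‖ := by
    rw [EuclideanSpace.norm_eq, ← Real.sqrt_mul (by norm_num)]
    apply Real.sqrt_le_sqrt
    unfold sqForm
    rw [Fintype.sum_prod_type]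
    rw [mul_le_mul_iff_right₀ (by norm_num : (0:ℝ) < 2)]
    apply Finset.sum_le_sum; intro i _
    apply Finset.sum_le_sum; intro j _
    have happ : (u + v) (i, j) = u (i, j) + v (i, j) := rfl
    rw [Real.norm_eq_abs, sq_abs, happ, hu, hv]
    simp only
    rw [← mul_add, mul_pow, Real.sq_sqrt (gw_nonneg _ _)]
    apply mul_le_mul_of_nonneg_left _ (gw_nonneg _ _)
    rw [← Complex.sq_norm]
    apply pow_le_pow_left₀ (norm_nonneg _)
    rw [Matrix.add_apply]
    exact norm_add_le _ _
  calc Real.sqrt (sqForm d (A + B)) ≤ Real.sqrt 2 * ‖u + v‖ := key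
    _ ≤ Real.sqrt 2 * (‖u‖ + ‖v‖) :=
        mul_le_mul_of_nonneg_left (norm_add_le u v) (Real.sqrt_nonneg 2)
    _ = Real.sqrt (sqForm d A) + Real.sqrt (sqForm d B) := by
        rw [sqForm_norm_eq d A u (fun p => rfl), sqForm_norm_eq d B v (fun p => rfl)]; ring

end AuxQF

section Obj
variable {n : Type*} [Fintype n] [DecidableEq n]

noncomputable def objQF (ρ X L : Matrix n n ℂ) : ℝ :=
  4 * (Complex.I * ((ρ * X - X * ρ) * L).trace).re - 4 * ((ρ * (L * L)).trace).re

lemma objQF_conj (V D M K : Matrix n n ℂ) (hV1 : Vᴴ * V = 1) :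
    objQF (V * D * Vᴴ) (V * M * Vᴴ) (V * K * Vᴴ) = objQF D M K := by
  have hmul : ∀ P Q : Matrix n n ℂ, (V * P * Vᴴ) * (V * Q * Vᴴ) = V * (P * Q) * Vᴴ := by
    intro P Q
    calc (V * P * Vᴴ) * (V * Q * Vᴴ) = V * (P * ((Vᴴ * V) * (Q * Vᴴ))) := by
          simp only [Matrix.mul_assoc]
      _ = V * (P * Q) * Vᴴ := by rw [hV1, Matrix.one_mul]; simp only [Matrix.mul_assoc]
  have htr : ∀ N : Matrix n n ℂ, (V * N * Vᴴ).trace = N.trace := by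
    intro N
    rw [Matrix.trace_mul_cycle, hV1, Matrix.one_mul]
  unfold objQF
  congr 2
  · congr 1
    rw [Matrix.sub_mul, hmul, hmul, hmul, hmul, ← Matrix.sub_mul, ← Matrix.mul_sub, htr,
      Matrix.sub_mul]
  · rw [hmul, hmul, htr]

lemma objQF_diag (d : n → ℝ) (M K : Matrix n n ℂ) (hK : K.IsHermitian) :
    objQF (Matrix.diagonal (fun i => (d i : ℂ))) M K
      = ∑ i, ∑ j, (4 * ((d i - d j) * (Complex.I * (M i j * (starRingEnd ℂ) (K i j))).re)
          - 2 * ((d i + d j) * Complex.normSq (K i j))) := by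
  have hKc : ∀ i j, K j i = (starRingEnd ℂ) (K i j) := by
    intro i j
    nth_rewrite 1 [← hK.eq]
    rw [Matrix.conjTranspose_apply]
    rfl
  have t1 : (Complex.I * ((Matrix.diagonal (fun i => (d i : ℂ)) * M
        - M * Matrix.diagonal (fun i => (d i : ℂ))) * K).trace).re
      = ∑ i, ∑ j, (d i - d j) * (Complex.I * (M i j * (starRingEnd ℂ) (K i j))).re := by
    have htrace : ((Matrix.diagonal (fun i => (d i : ℂ)) * M
          - M * Matrix.diagonal (fun i => (d i : ℂ))) * K).trace
        = ∑ i, ∑ j, (((d i : ℂ) * M i j - M i j * (d j : ℂ)) * K j i) := by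
      rw [Matrix.trace]
      apply Finset.sum_congr rfl; intro i _
      rw [Matrix.diag_apply, Matrix.mul_apply]
      apply Finset.sum_congr rfl; intro j _
      rw [Matrix.sub_apply, Matrix.diagonal_mul, Matrix.mul_diagonal]
    rw [htrace, Finset.mul_sum, Complex.re_sum]
    apply Finset.sum_congr rfl; intro i _
    rw [Finset.mul_sum, Complex.re_sum]
    apply Finset.sum_congr rfl; intro j _
    have key : Complex.I * (((d i : ℂ) * M i j - M i j * (d j : ℂ)) * K j i)
        = ((d i - d j : ℝ) : ℂ) * (Complex.I * (M i j * (starRingEnd ℂ) (K i j))) := by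
      rw [hKc i j]; push_cast; ring
    rw [key, Complex.re_ofReal_mul]
  have t2 : ((Matrix.diagonal (fun i => (d i : ℂ)) * (K * K)).trace).re
      = ∑ i, ∑ j, d i * Complex.normSq (K i j) := by
    have htrace : (Matrix.diagonal (fun i => (d i : ℂ)) * (K * K)).trace
        = ∑ i, ∑ j, ((d i * Complex.normSq (K i j) : ℝ) : ℂ) := by
      rw [Matrix.trace]
      apply Finset.sum_congr rfl; intro i _
      rw [Matrix.diag_apply, Matrix.diagonal_mul, Matrix.mul_apply, Finset.mul_sum]
      apply Finset.sum_congr rfl; intro j _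
      rw [hKc i j, Complex.mul_conj]
      push_cast; ring
    rw [htrace, Complex.re_sum]
    apply Finset.sum_congr rfl; intro i _
    rw [Complex.re_sum]
    apply Finset.sum_congr rfl; intro j _
    rw [Complex.ofReal_re]
  have t3 : ∑ i, ∑ j, d i * Complex.normSq (K i j) = ∑ i, ∑ j, d j * Complex.normSq (K i j) := by
    rw [Finset.sum_comm]
    apply Finset.sum_congr rfl; intro i _
    apply Finset.sum_congr rfl; intro j _
    rw [hKc i j, Complex.normSq_conj]
  have expand : ∑ i, ∑ j, (4 * ((d i - d j) * (Complex.I * (M i j * (starRingEnd ℂ) (K i j))).re)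
          - 2 * ((d i + d j) * Complex.normSq (K i j)))
      = 4 * (∑ i, ∑ j, (d i - d j) * (Complex.I * (M i j * (starRingEnd ℂ) (K i j))).re)
        - 2 * (∑ i, ∑ j, d i * Complex.normSq (K i j))
        - 2 * (∑ i, ∑ j, d j * Complex.normSq (K i j)) := by
    simp only [mul_add, mul_sub, sub_mul, add_mul, Finset.sum_add_distrib, Finset.sum_sub_distrib, Finset.mul_sum]
    ring
  unfold objQF
  rw [t1, t2, expand, ← t3]
  ring

lemma term_le (a b : ℝ) (ha : 0 ≤ a) (hb : 0 ≤ b) (z w : ℂ) :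
    4 * ((a - b) * (Complex.I * (z * (starRingEnd ℂ) w)).re)
        - 2 * ((a + b) * Complex.normSq w)
      ≤ 2 * (gw a b * Complex.normSq z) := by
  set r := (Complex.I * (z * (starRingEnd ℂ) w)).re with hr_def
  have hr2 : r ^ 2 ≤ Complex.normSq z * Complex.normSq w := by
    have h1 := Complex.abs_re_le_norm (Complex.I * (z * (starRingEnd ℂ) w))
    have h2 : ‖Complex.I * (z * (starRingEnd ℂ) w)‖ ^ 2
        = Complex.normSq z * Complex.normSq w := by
      rw [norm_mul, norm_mul, Complex.norm_I, one_mul, mul_pow, Complex.sq_norm,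
        Complex.sq_norm, Complex.normSq_conj]
    calc r ^ 2 = |r| ^ 2 := (sq_abs r).symm
      _ ≤ ‖Complex.I * (z * (starRingEnd ℂ) w)‖ ^ 2 :=
          pow_le_pow_left₀ (abs_nonneg r) h1 2
      _ = Complex.normSq z * Complex.normSq w := h2
  have hm := Complex.normSq_nonneg z
  have hnn := Complex.normSq_nonneg w
  by_cases hs : 0 < a + b
  · rw [gw, if_pos hs]
    rw [div_mul_eq_mul_div, ← mul_div_assoc, le_div_iff₀ hs]
    rcases hm.eq_or_lt with hm0 | hm0
    · have hr0 : r = 0 := by nlinarith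
      rw [hr0, ← hm0]
      nlinarith [mul_nonneg hnn hs.le, mul_pos hs hs]
    · nlinarith [sq_nonneg ((a - b) * Complex.normSq z - (a + b) * r),
        mul_nonneg (sub_nonneg.mpr hr2) (sq_nonneg (a + b))]
  · have hab : a + b = 0 := le_antisymm (not_lt.mp hs) (by positivity)
    have ha0 : a = 0 := by linarith
    have hb0 : b = 0 := by linarith
    rw [gw, if_neg hs, ha0, hb0]
    simp

noncomputable def wopt (a b : ℝ) (z : ℂ) : ℂ :=
  if 0 < a + b then Complex.I * ((a - b : ℝ) : ℂ) * z / ((a + b : ℝ) : ℂ) else 0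

lemma term_eq (a b : ℝ) (z : ℂ) :
    4 * ((a - b) * (Complex.I * (z * (starRingEnd ℂ) (wopt a b z))).re)
        - 2 * ((a + b) * Complex.normSq (wopt a b z))
      = 2 * (gw a b * Complex.normSq z) := by
  unfold wopt gw
  by_cases hs : 0 < a + b
  · rw [if_pos hs, if_pos hs]
    have hsne : ((a + b : ℝ) : ℂ) ≠ 0 := Complex.ofReal_ne_zero.mpr (ne_of_gt hs)
    have h1 : Complex.I * (z * (starRingEnd ℂ) (Complex.I * ((a - b : ℝ) : ℂ) * z
          / ((a + b : ℝ) : ℂ)))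
        = (((a - b) * Complex.normSq z / (a + b) : ℝ) : ℂ) := by
      rw [map_div₀, _root_.map_mul, _root_.map_mul, Complex.conj_I, Complex.conj_ofReal,
        Complex.conj_ofReal]
      push_cast
      rw [← Complex.mul_conj]
      linear_combination (-(((a : ℂ) - (b : ℂ)) * (z * (starRingEnd ℂ) z) /
        ((a : ℂ) + (b : ℂ)))) * Complex.I_sq
    rw [h1, Complex.ofReal_re]
    have h2 : Complex.normSq (Complex.I * ((a - b : ℝ) : ℂ) * z / ((a + b : ℝ) : ℂ))
        = (a - b) ^ 2 * Complex.normSq z / (a + b) ^ 2 := by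
      rw [map_div₀, _root_.map_mul, _root_.map_mul, Complex.normSq_I, one_mul,
        Complex.normSq_ofReal, Complex.normSq_ofReal]
      ring
    rw [h2]
    field_simp
    ring
  · rw [if_neg hs, if_neg hs]
    simp

lemma objQF_diag_le (d : n → ℝ) (hd : ∀ i, 0 ≤ d i) (M K : Matrix n n ℂ)
    (hK : K.IsHermitian) :
    objQF (Matrix.diagonal fun i => (d i : ℂ)) M K ≤ sqForm d M := by
  rw [objQF_diag d M K hK]
  unfold sqForm
  rw [Finset.mul_sum]
  apply Finset.sum_le_sum; intro i _
  rw [Finset.mul_sum]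
  apply Finset.sum_le_sum; intro j _
  exact term_le _ _ (hd i) (hd j) _ _

lemma kopt_isHermitian (d : n → ℝ) (M : Matrix n n ℂ) (hM : M.IsHermitian) :
    (Matrix.of fun i j => wopt (d i) (d j) (M i j)).IsHermitian := by
  have hMc : ∀ i j, M j i = (starRingEnd ℂ) (M i j) := by
    intro i j
    nth_rewrite 1 [← hM.eq]
    rw [Matrix.conjTranspose_apply]
    rfl
  apply Matrix.IsHermitian.ext
  intro i j
  rw [Matrix.of_apply, Matrix.of_apply]
  show star (wopt (d j) (d i) (M j i)) = wopt (d i) (d j) (M i j)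
  unfold wopt
  have hcomm : d j + d i = d i + d j := add_comm _ _
  by_cases hs : 0 < d i + d j
  · rw [if_pos (by rw [hcomm]; exact hs), if_pos hs, hMc i j]
    show (starRingEnd ℂ) _ = _
    rw [map_div₀, _root_.map_mul, _root_.map_mul, Complex.conj_I, Complex.conj_ofReal,
      Complex.conj_ofReal]
    rw [Complex.conj_conj, hcomm]
    push_cast
    ring
  · rw [if_neg (by rw [hcomm]; exact hs), if_neg hs, star_zero]

lemma objQF_diag_opt (d : n → ℝ) (M : Matrix n n ℂ) (hM : M.IsHermitian) :
    objQF (Matrix.diagonal fun i => (d i : ℂ)) M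
        (Matrix.of fun i j => wopt (d i) (d j) (M i j)) = sqForm d M := by
  rw [objQF_diag d M _ (kopt_isHermitian d M hM)]
  unfold sqForm
  rw [Finset.mul_sum]
  apply Finset.sum_congr rfl; intro i _
  rw [Finset.mul_sum]
  apply Finset.sum_congr rfl; intro j _
  rw [Matrix.of_apply]
  exact term_eq _ _ _

lemma spectral_le {ρ X : Matrix n n ℂ} (hX : X.IsHermitian)
    (V : Matrix n n ℂ) (hV1 : Vᴴ * V = 1) (hV2 : V * Vᴴ = 1) (d : n → ℝ) (hd : ∀ i, 0 ≤ d i)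
    (hρ : ρ = V * Matrix.diagonal (fun i => (d i : ℂ)) * Vᴴ)
    (L : Matrix n n ℂ) (hL : L.IsHermitian) :
    objQF ρ X L ≤ sqForm d (Vᴴ * X * V) := by
  have hX' : X = V * (Vᴴ * X * V) * Vᴴ := by
    calc X = (V * Vᴴ) * X * (V * Vᴴ) := by rw [hV2, Matrix.one_mul, Matrix.mul_one]
      _ = V * (Vᴴ * X * V) * Vᴴ := by simp only [Matrix.mul_assoc]
  have hL' : L = V * (Vᴴ * L * V) * Vᴴ := by
    calc L = (V * Vᴴ) * L * (V * Vᴴ) := by rw [hV2, Matrix.one_mul, Matrix.mul_one]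
      _ = V * (Vᴴ * L * V) * Vᴴ := by simp only [Matrix.mul_assoc]
  calc objQF ρ X L
      = objQF (V * Matrix.diagonal (fun i => (d i : ℂ)) * Vᴴ) (V * (Vᴴ * X * V) * Vᴴ)
          (V * (Vᴴ * L * V) * Vᴴ) := by rw [← hX', ← hL', ← hρ]
    _ = objQF (Matrix.diagonal (fun i => (d i : ℂ))) (Vᴴ * X * V) (Vᴴ * L * V) :=
        objQF_conj V _ _ _ hV1
    _ ≤ sqForm d (Vᴴ * X * V) :=
        objQF_diag_le d hd _ _ (Matrix.isHermitian_conjTranspose_mul_mul V hL)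

lemma spectral_opt {ρ X : Matrix n n ℂ} (hX : X.IsHermitian)
    (V : Matrix n n ℂ) (hV1 : Vᴴ * V = 1) (hV2 : V * Vᴴ = 1) (d : n → ℝ)
    (hρ : ρ = V * Matrix.diagonal (fun i => (d i : ℂ)) * Vᴴ) :
    ∃ L : Matrix n n ℂ, L.IsHermitian ∧ objQF ρ X L = sqForm d (Vᴴ * X * V) := by
  set M := Vᴴ * X * V with hM
  have hMh : M.IsHermitian := Matrix.isHermitian_conjTranspose_mul_mul V hX
  set K := (Matrix.of fun i j => wopt (d i) (d j) (M i j)) with hKdef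
  have hKh : K.IsHermitian := kopt_isHermitian d M hMh
  refine ⟨V * K * Vᴴ, Matrix.isHermitian_mul_mul_conjTranspose V hKh, ?_⟩
  have hX' : X = V * M * Vᴴ := by
    calc X = (V * Vᴴ) * X * (V * Vᴴ) := by rw [hV2, Matrix.one_mul, Matrix.mul_one]
      _ = V * M * Vᴴ := by rw [hM]; simp only [Matrix.mul_assoc]
  calc objQF ρ X (V * K * Vᴴ)
      = objQF (V * Matrix.diagonal (fun i => (d i : ℂ)) * Vᴴ) (V * M * Vᴴ) (V * K * Vᴴ) := by
        rw [← hX', ← hρ]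
    _ = objQF (Matrix.diagonal (fun i => (d i : ℂ))) M K := objQF_conj V _ _ _ hV1
    _ = sqForm d M := objQF_diag_opt d M hMh

lemma sqForm_spectral_unique {ρ X : Matrix n n ℂ} (hX : X.IsHermitian)
    (V : Matrix n n ℂ) (hV1 : Vᴴ * V = 1) (hV2 : V * Vᴴ = 1) (d : n → ℝ) (hd : ∀ i, 0 ≤ d i)
    (hρV : ρ = V * Matrix.diagonal (fun i => (d i : ℂ)) * Vᴴ)
    (W : Matrix n n ℂ) (hW1 : Wᴴ * W = 1) (hW2 : W * Wᴴ = 1) (e : n → ℝ) (he : ∀ i, 0 ≤ e i)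
    (hρW : ρ = W * Matrix.diagonal (fun i => (e i : ℂ)) * Wᴴ) :
    sqForm d (Vᴴ * X * V) = sqForm e (Wᴴ * X * W) := by
  obtain ⟨L1, hL1h, hL1⟩ := spectral_opt hX V hV1 hV2 d hρV
  obtain ⟨L2, hL2h, hL2⟩ := spectral_opt hX W hW1 hW2 e hρW
  have h1 : objQF ρ X L1 ≤ sqForm e (Wᴴ * X * W) := spectral_le hX W hW1 hW2 e he hρW L1 hL1h
  have h2 : objQF ρ X L2 ≤ sqForm d (Vᴴ * X * V) := spectral_le hX V hV1 hV2 d hd hρV L2 hL2h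
  rw [hL1] at h1
  rw [hL2] at h2
  exact le_antisymm h1 h2

lemma qFisher_eq_sqForm {ρ : Matrix n n ℂ} (X : Matrix n n ℂ) (hρ : ρ.IsHermitian) :
    qFisher ρ X = sqForm hρ.eigenvalues
      ((hρ.eigenvectorUnitary : Matrix n n ℂ)ᴴ * X * (hρ.eigenvectorUnitary : Matrix n n ℂ)) := by
  unfold qFisher sqForm
  rw [dif_pos hρ]
  congr 1
  apply Finset.sum_congr rfl; intro i _
  apply Finset.sum_congr rfl; intro j _
  have hdot : dotProduct (star ⇑(hρ.eigenvectorBasis i))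
        (X *ᵥ ⇑(hρ.eigenvectorBasis j))
      = ((hρ.eigenvectorUnitary : Matrix n n ℂ)ᴴ * X *
          (hρ.eigenvectorUnitary : Matrix n n ℂ)) i j := by
    simp only [dotProduct, Matrix.mul_apply, Matrix.mulVec, Matrix.conjTranspose_apply,
      Matrix.IsHermitian.eigenvectorUnitary_apply, Pi.star_apply, dotProduct,
      Finset.sum_mul, Finset.mul_sum]
    rw [Finset.sum_comm]
    apply Finset.sum_congr rfl; intro p _
    apply Finset.sum_congr rfl; intro q _
    ring
  rw [gw, ite_mul, zero_mul, hdot]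

lemma qFisher_eq_spectral {ρ X : Matrix n n ℂ} (hpsd : ρ.PosSemidef) (hX : X.IsHermitian)
    (W : Matrix n n ℂ) (hW1 : Wᴴ * W = 1) (hW2 : W * Wᴴ = 1) (e : n → ℝ) (he : ∀ i, 0 ≤ e i)
    (hρW : ρ = W * Matrix.diagonal (fun i => (e i : ℂ)) * Wᴴ) :
    qFisher ρ X = sqForm e (Wᴴ * X * W) := by
  have hρ : ρ.IsHermitian := hpsd.1
  rw [qFisher_eq_sqForm X hρ]
  set V := (hρ.eigenvectorUnitary : Matrix n n ℂ) with hV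
  have hV1 : Vᴴ * V = 1 := by
    have := hρ.eigenvectorUnitary.2
    rw [Matrix.mem_unitaryGroup_iff'] at this
    simpa [star_eq_conjTranspose] using this
  have hV2 : V * Vᴴ = 1 := by
    have := hρ.eigenvectorUnitary.2
    rw [Matrix.mem_unitaryGroup_iff] at this
    simpa [star_eq_conjTranspose] using this
  have hspec : ρ = V * Matrix.diagonal (fun i => ((hρ.eigenvalues i : ℝ) : ℂ)) * Vᴴ := by
    conv_lhs => rw [hρ.spectral_theorem]
    rfl
  exact sqForm_spectral_unique hX V hV1 hV2 hρ.eigenvalues (hpsd.eigenvalues_nonneg) hspec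
    W hW1 hW2 e he hρW

lemma qFisher_sqrt_triangle (ρ A B : Matrix n n ℂ) :
    Real.sqrt (qFisher ρ (A + B))
      ≤ Real.sqrt (qFisher ρ A) + Real.sqrt (qFisher ρ B) := by
  by_cases hρ : ρ.IsHermitian
  · rw [qFisher_eq_sqForm (A + B) hρ, qFisher_eq_sqForm A hρ, qFisher_eq_sqForm B hρ]
    have hlin : (hρ.eigenvectorUnitary : Matrix n n ℂ)ᴴ * (A + B) *
          (hρ.eigenvectorUnitary : Matrix n n ℂ)
        = (hρ.eigenvectorUnitary : Matrix n n ℂ)ᴴ * A * (hρ.eigenvectorUnitary : Matrix n n ℂ)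
          + (hρ.eigenvectorUnitary : Matrix n n ℂ)ᴴ * B *
            (hρ.eigenvectorUnitary : Matrix n n ℂ) := by
      rw [Matrix.mul_add, Matrix.add_mul]
    rw [hlin]
    exact sqrt_sqForm_triangle _ _ _
  · unfold qFisher
    rw [dif_neg hρ, Real.sqrt_zero]
    positivity

end Obj

section Kron
open scoped Kronecker
variable {α β : Type*} [Fintype α] [DecidableEq α] [Fintype β] [DecidableEq β]

lemma kron_conjTranspose (A : Matrix α α ℂ) (B : Matrix β β ℂ) :
    (A ⊗ₖ B)ᴴ = Aᴴ ⊗ₖ Bᴴ := by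
  ext ⟨i, k⟩ ⟨j, l⟩
  simp only [Matrix.conjTranspose_apply, Matrix.kroneckerMap_apply, star_mul']

lemma sub_kron (A B : Matrix α α ℂ) (C : Matrix β β ℂ) :
    (A - B) ⊗ₖ C = A ⊗ₖ C - B ⊗ₖ C := by
  ext ⟨i, k⟩ ⟨j, l⟩
  simp only [Matrix.kroneckerMap_apply, Matrix.sub_apply, sub_mul]

lemma sqForm_kron (d : α → ℝ) (m : β → ℝ) (hm : ∀ k, 0 ≤ m k) (M : Matrix α α ℂ) :
    sqForm (fun p : α × β => d p.1 * m p.2) (M ⊗ₖ (1 : Matrix β β ℂ))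
      = (∑ k, m k) * sqForm d M := by
  unfold sqForm
  rw [Fintype.sum_prod_type]
  have inner : ∀ (i : α) (k : β) (j : α),
      (∑ l, gw (d i * m k) (d j * m l) *
          Complex.normSq ((M ⊗ₖ (1 : Matrix β β ℂ)) (i, k) (j, l)))
        = m k * (gw (d i) (d j) * Complex.normSq (M i j)) := by
    intro i k j
    rw [Finset.sum_eq_single k]
    · rw [Matrix.kroneckerMap_apply, Matrix.one_apply_eq, mul_one,
        gw_mul_right (d i) (d j) (m k) (hm k)]
      ring
    · intro l _ hlk
      rw [Matrix.kroneckerMap_apply, Matrix.one_apply_ne (Ne.symm hlk), mul_zero]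
      simp
    · intro h
      exact absurd (Finset.mem_univ k) h
  have step : ∀ i : α, (∑ k, ∑ p : α × β, gw (d i * m k) (d p.1 * m p.2) *
        Complex.normSq ((M ⊗ₖ (1 : Matrix β β ℂ)) (i, k) p))
      = (∑ k, m k) * ∑ j, gw (d i) (d j) * Complex.normSq (M i j) := by
    intro i
    rw [Finset.sum_mul]
    apply Finset.sum_congr rfl; intro k _
    rw [Fintype.sum_prod_type, Finset.mul_sum]
    apply Finset.sum_congr rfl; intro j _
    exact inner i k j
  calc 2 * ∑ i, ∑ k, ∑ p : α × β, gw (d i * m k) (d p.1 * m p.2) *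
        Complex.normSq ((M ⊗ₖ (1 : Matrix β β ℂ)) (i, k) p)
      = 2 * ∑ i, (∑ k, m k) * ∑ j, gw (d i) (d j) * Complex.normSq (M i j) := by
        congr 1
        exact Finset.sum_congr rfl fun i _ => step i
    _ = (∑ k, m k) * (2 * ∑ i, ∑ j, gw (d i) (d j) * Complex.normSq (M i j)) := by
        rw [← Finset.mul_sum]
        ring

lemma trace_one_sum_eigen {σ : Matrix β β ℂ} (hσ : σ.PosSemidef) (ht : σ.trace = 1) :
    ∑ k, hσ.1.eigenvalues k = 1 := by
  have hs : σ = (hσ.1.eigenvectorUnitary : Matrix β β ℂ) *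
      Matrix.diagonal (fun i => ((hσ.1.eigenvalues i : ℝ) : ℂ)) *
      star (hσ.1.eigenvectorUnitary : Matrix β β ℂ) := by
    conv_lhs => rw [hσ.1.spectral_theorem]
    rfl
  have htr : σ.trace = ∑ k, ((hσ.1.eigenvalues k : ℝ) : ℂ) := by
    conv_lhs => rw [hs]
    rw [Matrix.trace_mul_cycle]
    have : (star (hσ.1.eigenvectorUnitary : Matrix β β ℂ)) *
        (hσ.1.eigenvectorUnitary : Matrix β β ℂ) = 1 := by
      have := hσ.1.eigenvectorUnitary.2
      rw [Matrix.mem_unitaryGroup_iff'] at this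
      exact this
    rw [this, Matrix.one_mul, Matrix.trace_diagonal]
  rw [ht] at htr
  have h2 : ((∑ k, hσ.1.eigenvalues k : ℝ) : ℂ) = 1 := by
    push_cast
    exact htr.symm
  exact_mod_cast h2

lemma qFisher_kron (ρ : Matrix α α ℂ) (σ : Matrix β β ℂ)
    (hρ : ρ.PosSemidef) (hσ : σ.PosSemidef) (hσt : σ.trace = 1)
    (Y : Matrix α α ℂ) (hY : Y.IsHermitian) :
    qFisher (ρ ⊗ₖ σ) (Y ⊗ₖ (1 : Matrix β β ℂ)) = qFisher ρ Y := by
  classical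
  set VA := (hρ.1.eigenvectorUnitary : Matrix α α ℂ) with hVA
  set VB := (hσ.1.eigenvectorUnitary : Matrix β β ℂ) with hVB
  have hVA1 : VAᴴ * VA = 1 := by
    have := hρ.1.eigenvectorUnitary.2
    rw [Matrix.mem_unitaryGroup_iff'] at this
    simpa [star_eq_conjTranspose] using this
  have hVA2 : VA * VAᴴ = 1 := by
    have := hρ.1.eigenvectorUnitary.2
    rw [Matrix.mem_unitaryGroup_iff] at this
    simpa [star_eq_conjTranspose] using this
  have hVB1 : VBᴴ * VB = 1 := by
    have := hσ.1.eigenvectorUnitary.2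
    rw [Matrix.mem_unitaryGroup_iff'] at this
    simpa [star_eq_conjTranspose] using this
  have hVB2 : VB * VBᴴ = 1 := by
    have := hσ.1.eigenvectorUnitary.2
    rw [Matrix.mem_unitaryGroup_iff] at this
    simpa [star_eq_conjTranspose] using this
  set lam := hρ.1.eigenvalues with hlam
  set mu := hσ.1.eigenvalues with hmu
  have hspecA : ρ = VA * Matrix.diagonal (fun i => ((lam i : ℝ) : ℂ)) * VAᴴ := by
    conv_lhs => rw [hρ.1.spectral_theorem]
    rfl
  have hspecB : σ = VB * Matrix.diagonal (fun k => ((mu k : ℝ) : ℂ)) * VBᴴ := by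
    conv_lhs => rw [hσ.1.spectral_theorem]
    rfl
  set W := VA ⊗ₖ VB with hW
  have hWH : Wᴴ = VAᴴ ⊗ₖ VBᴴ := kron_conjTranspose VA VB
  have hW1 : Wᴴ * W = 1 := by
    rw [hWH, hW, ← Matrix.mul_kronecker_mul, hVA1, hVB1, Matrix.one_kronecker_one]
  have hW2 : W * Wᴴ = 1 := by
    rw [hWH, hW, ← Matrix.mul_kronecker_mul, hVA2, hVB2, Matrix.one_kronecker_one]
  have hspec : ρ ⊗ₖ σ = W * Matrix.diagonal (fun p : α × β => ((lam p.1 * mu p.2 : ℝ) : ℂ)) * Wᴴ := by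
    conv_lhs => rw [hspecA, hspecB]
    rw [hW, hWH, Matrix.mul_kronecker_mul, Matrix.mul_kronecker_mul,
      Matrix.diagonal_kronecker_diagonal]
    congr 1
    congr 1
    congr 1
    funext p
    push_cast
    rfl
  have hee : ∀ p : α × β, 0 ≤ lam p.1 * mu p.2 := fun p =>
    mul_nonneg (hρ.eigenvalues_nonneg p.1) (hσ.eigenvalues_nonneg p.2)
  have hpsdk : (ρ ⊗ₖ σ).PosSemidef := by
    rw [hspec]
    apply Matrix.PosSemidef.mul_mul_conjTranspose_same
    rw [Matrix.posSemidef_diagonal_iff]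
    intro p
    rw [Complex.le_def]
    constructor
    · simpa using hee p
    · simp
  have hYk : (Y ⊗ₖ (1 : Matrix β β ℂ)).IsHermitian := by
    unfold Matrix.IsHermitian
    rw [kron_conjTranspose, hY.eq, Matrix.conjTranspose_one]
  have hconj : Wᴴ * (Y ⊗ₖ (1 : Matrix β β ℂ)) * W = (VAᴴ * Y * VA) ⊗ₖ (1 : Matrix β β ℂ) := by
    rw [hWH, hW, ← Matrix.mul_kronecker_mul, ← Matrix.mul_kronecker_mul, Matrix.mul_one, hVB1]
  rw [qFisher_eq_spectral hpsdk hYk W hW1 hW2 (fun p => lam p.1 * mu p.2) hee hspec]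
  rw [hconj, sqForm_kron lam mu hσ.eigenvalues_nonneg (VAᴴ * Y * VA),
    trace_one_sum_eigen hσ hσt, one_mul, qFisher_eq_sqForm Y hρ.1]

end Kron



section DualAux
variable {n m : Type*} [Fintype n] [DecidableEq n] [Fintype m] [DecidableEq m]

lemma stdBasis_conjT (i j : n) :
    (Matrix.single i j (1 : ℂ))ᴴ = Matrix.single j i 1 := by
  ext a b
  simp only [Matrix.conjTranspose_apply, Matrix.single, Matrix.of_apply]
  rw [apply_ite (star : ℂ → ℂ), star_one, star_zero]
  exact if_congr and_comm rfl rfl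

lemma dualMap_isHermitian (Φ : Matrix n n ℂ → Matrix m m ℂ)
    (hΦ : ∀ M, Φ Mᴴ = (Φ M)ᴴ) {W : Matrix m m ℂ} (hW : W.IsHermitian) :
    (dualMap Φ W).IsHermitian := by
  show (dualMap Φ W)ᴴ = dualMap Φ W
  ext i j
  rw [Matrix.conjTranspose_apply]
  simp only [dualMap, Matrix.of_apply]
  rw [← Matrix.trace_conjTranspose, Matrix.conjTranspose_mul, ← hΦ, stdBasis_conjT, hW.eq,
    Matrix.trace_mul_comm]

lemma ptraceRight_conjT {γ δ : Type*} [Fintype δ] (M : Matrix (γ × δ) (γ × δ) ℂ) :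
    ptraceRight (Mᴴ) = (ptraceRight M)ᴴ := by
  ext i j
  simp only [ptraceRight, Matrix.of_apply, Matrix.conjTranspose_apply]
  rw [star_sum]

end DualAux

/-- upper bound `Δ ≤ √𝔉_ρ(Y) + √𝔉_{ρ⊗ρ_B}(E†(X_{A'})⊗1 − U†(X_{A'}⊗1)U)`. -/
theorem statement_8
    {dA dB dA' dB' : Type*} [Fintype dA] [DecidableEq dA] [Fintype dB] [DecidableEq dB]
    [Fintype dA'] [DecidableEq dA'] [Fintype dB'] [DecidableEq dB']
    (e : dA × dB ≃ dA' × dB')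
    (U : Matrix (dA × dB) (dA × dB) ℂ) (hU : U * Uᴴ = 1 ∧ Uᴴ * U = 1)
    (ρB : Matrix dB dB ℂ) (hρB : IsState ρB)
    (XA : Matrix dA dA ℂ) (hXA : XA.IsHermitian)
    (XA' : Matrix dA' dA' ℂ) (hXA' : XA'.IsHermitian)
    (Emap : Matrix dA dA ℂ → Matrix dA' dA' ℂ)
    (hE : ∀ τ, Emap τ = ptraceRight (Matrix.reindex e e (U * (τ ⊗ₖ ρB) * Uᴴ)))
    (Y : Matrix dA dA ℂ) (hY : Y = XA - dualMap Emap XA')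
    (ρ : Matrix dA dA ℂ) (hρ : IsState ρ) :
    Real.sqrt (qFisher (ρ ⊗ₖ ρB)
        (XA ⊗ₖ (1 : Matrix dB dB ℂ)
          - Uᴴ * (Matrix.reindex e.symm e.symm (XA' ⊗ₖ (1 : Matrix dB' dB' ℂ))) * U))
      ≤ Real.sqrt (qFisher ρ Y)
        + Real.sqrt (qFisher (ρ ⊗ₖ ρB)
            ((dualMap Emap XA') ⊗ₖ (1 : Matrix dB dB ℂ)
              - Uᴴ * (Matrix.reindex e.symm e.symm (XA' ⊗ₖ (1 : Matrix dB' dB' ℂ))) * U)) := by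
  classical
  have hEstar : ∀ τ : Matrix dA dA ℂ, Emap τᴴ = (Emap τ)ᴴ := by
    intro τ
    rw [hE, hE]
    have h1 : (U * (τ ⊗ₖ ρB) * Uᴴ)ᴴ = U * (τᴴ ⊗ₖ ρB) * Uᴴ := by
      rw [Matrix.conjTranspose_mul, Matrix.conjTranspose_mul,
        Matrix.conjTranspose_conjTranspose, kron_conjTranspose, hρB.1.1.eq]
      simp only [Matrix.mul_assoc]
    calc ptraceRight (Matrix.reindex e e (U * (τᴴ ⊗ₖ ρB) * Uᴴ))
        = ptraceRight (Matrix.reindex e e ((U * (τ ⊗ₖ ρB) * Uᴴ)ᴴ)) := by rw [h1]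
      _ = ptraceRight ((Matrix.reindex e e (U * (τ ⊗ₖ ρB) * Uᴴ))ᴴ) := by
          rw [Matrix.conjTranspose_reindex]
      _ = (ptraceRight (Matrix.reindex e e (U * (τ ⊗ₖ ρB) * Uᴴ)))ᴴ := ptraceRight_conjT _
  have hdualh : (dualMap Emap XA').IsHermitian := dualMap_isHermitian Emap hEstar hXA'
  have hYh : Y.IsHermitian := by
    rw [hY]
    exact hXA.sub hdualh
  have hsplit : XA ⊗ₖ (1 : Matrix dB dB ℂ)
        - Uᴴ * (Matrix.reindex e.symm e.symm (XA' ⊗ₖ (1 : Matrix dB' dB' ℂ))) * U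
      = Y ⊗ₖ (1 : Matrix dB dB ℂ)
        + ((dualMap Emap XA') ⊗ₖ (1 : Matrix dB dB ℂ)
            - Uᴴ * (Matrix.reindex e.symm e.symm (XA' ⊗ₖ (1 : Matrix dB' dB' ℂ))) * U) := by
    rw [hY, sub_kron]
    abel
  rw [hsplit]
  refine le_trans (qFisher_sqrt_triangle (ρ ⊗ₖ ρB) _ _) ?_
  rw [qFisher_kron ρ ρB hρ.1 hρB.1 hρB.2 Y hYh]
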